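/- Let X be a weakly normal gts such that X_top is a locally compact Hausdorff space. If V is open in X and x ∈ V, then there exist an open set U of X and a topologically compact closed set C of X with x ∈ U ⊆ C ⊆ V. -/

import Mathlib

open Set TopologicalSpace Topology

universe u

/-- A generalized topology in the sense of Delfs–Knebusch (axioms following
Piękosz, Definition 2.2.1): `Cov` is the collection of admissible open families,
and the open sets are the members of `⋃₀ Cov`. -/
structure GenTop (X : Type u) : Type u where
  Cov : Set (Set (Set X))
  univ_open : Set.univ ∈ ⋃₀ Cov
  finite_admissible : ∀ 𝒰 : Set (Set X), 𝒰.Finite → 𝒰 ⊆ ⋃₀ Cov → 𝒰 ∈ Cov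
  union_open : ∀ 𝒰 ∈ Cov, ⋃₀ 𝒰 ∈ ⋃₀ Cov
  restrict : ∀ 𝒰 ∈ Cov, ∀ V ∈ ⋃₀ Cov, (fun U => V ∩ U) '' 𝒰 ∈ Cov
  transitive : ∀ 𝒰 ∈ Cov, ∀ f : Set X → Set (Set X),
    (∀ U ∈ 𝒰, f U ∈ Cov ∧ ⋃₀ f U = U) → {V : Set X | ∃ U ∈ 𝒰, V ∈ f U} ∈ Cov
  coarsen : ∀ 𝒰 ∈ Cov, ∀ 𝒱 ⊆ ⋃₀ Cov, (∀ U ∈ 𝒰, ∃ V ∈ 𝒱, U ⊆ V) →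
    ⋃₀ 𝒱 = ⋃₀ 𝒰 → 𝒱 ∈ Cov
  regular : ∀ 𝒰 ∈ Cov, ∀ W ⊆ ⋃₀ 𝒰, (∀ U ∈ 𝒰, W ∩ U ∈ ⋃₀ Cov) → W ∈ ⋃₀ Cov

namespace GenTop

variable {X : Type u} (G : GenTop X)

/-- The open sets of a gts. -/
def Opens : Set (Set X) := ⋃₀ G.Cov

/-- The closed sets of a gts. -/
def Closeds : Set (Set X) := {A : Set X | Aᶜ ∈ G.Opens}

/-- The topologization of a gts: the topology generated by the open sets. -/
def topol : TopologicalSpace X := TopologicalSpace.generateFrom G.Opens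

/-- A gts is weakly normal if disjoint sets, each a singleton or closed,
can be separated by disjoint open sets. -/
def WeaklyNormal : Prop :=
  ∀ A₁ A₂ : Set X, ((∃ x, A₁ = {x}) ∨ A₁ ∈ G.Closeds) →
    ((∃ x, A₂ = {x}) ∨ A₂ ∈ G.Closeds) → Disjoint A₁ A₂ →
    ∃ W₁ ∈ G.Opens, ∃ W₂ ∈ G.Opens, Disjoint W₁ W₂ ∧ A₁ ⊆ W₁ ∧ A₂ ⊆ W₂

lemma inter_mem_opens {X : Type u} (G : GenTop X) {A B : Set X}
    (hA : A ∈ G.Opens) (hB : B ∈ G.Opens) : A ∩ B ∈ G.Opens := by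
  have h1 : ({B} : Set (Set X)) ∈ G.Cov :=
    G.finite_admissible {B} (Set.finite_singleton B) (Set.singleton_subset_iff.mpr hB)
  have h2 := G.restrict {B} h1 A hA
  exact ⟨(fun U => A ∩ U) '' {B}, h2, ⟨B, rfl, rfl⟩⟩

lemma exists_basic {X : Type u} (G : GenTop X) {S : Set X}
    (hS : TopologicalSpace.GenerateOpen G.Opens S) :
    ∀ x ∈ S, ∃ B ∈ G.Opens, x ∈ B ∧ B ⊆ S := by
  induction hS with
  | basic U hU => exact fun x hx => ⟨U, hU, hx, subset_rfl⟩
  | univ => exact fun x _ => ⟨Set.univ, G.univ_open, Set.mem_univ x, subset_rfl⟩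
  | inter U W _ _ ihU ihW =>
      intro x hx
      obtain ⟨B1, hB1, hxB1, hB1s⟩ := ihU x hx.1
      obtain ⟨B2, hB2, hxB2, hB2s⟩ := ihW x hx.2
      exact ⟨B1 ∩ B2, G.inter_mem_opens hB1 hB2, ⟨hxB1, hxB2⟩,
        Set.inter_subset_inter hB1s hB2s⟩
  | sUnion 𝒮 _ ih =>
      intro x hx
      obtain ⟨t, ht, hxt⟩ := hx
      obtain ⟨B, hB, hxB, hBs⟩ := ih t ht x hxt
      exact ⟨B, hB, hxB, hBs.trans (Set.subset_sUnion_of_mem ht)⟩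

end GenTop

/-- In a weakly normal gts with locally compact Hausdorff topologization:
every point of an open set has an open neighbourhood contained in a
topologically compact closed subset of the open set. -/
theorem stmt_15 {X : Type u} (G : GenTop X) (hwn : G.WeaklyNormal)
    (hlc : @LocallyCompactSpace X G.topol) (h2 : @T2Space X G.topol)
    (V : Set X) (hV : V ∈ G.Opens) (x : X) (hx : x ∈ V) :
    ∃ U ∈ G.Opens, ∃ C ∈ G.Closeds,
      @IsCompact X G.topol C ∧ x ∈ U ∧ U ⊆ C ∧ C ⊆ V := by
  letI := G.topol
  have hVopen : IsOpen V := TopologicalSpace.GenerateOpen.basic V hV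
  obtain ⟨K, hK, hxK, hKV⟩ := exists_compact_subset hVopen hx
  have hintK : TopologicalSpace.GenerateOpen G.Opens (interior K) :=
    (isOpen_interior : IsOpen (interior K))
  obtain ⟨V', hV', hxV', hV'K⟩ := G.exists_basic hintK x hxK
  have hV'c : V'ᶜ ∈ G.Closeds := by
    simpa [GenTop.Closeds] using hV'
  obtain ⟨W₁, hW₁, W₂, hW₂, hdis, hxW₁, hW₂c⟩ :=
    hwn {x} V'ᶜ (Or.inl ⟨x, rfl⟩) (Or.inr hV'c)
      (by simpa [Set.disjoint_singleton_left] using hxV')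
  have hCcl : W₂ᶜ ∈ G.Closeds := by simpa [GenTop.Closeds] using hW₂
  have hCV' : W₂ᶜ ⊆ V' := by
    intro y hy
    by_contra hyn
    exact hy (hW₂c hyn)
  have hCK : W₂ᶜ ⊆ K := hCV'.trans (hV'K.trans interior_subset)
  have hW₂open : IsOpen W₂ := TopologicalSpace.GenerateOpen.basic W₂ hW₂
  have hCcomp : IsCompact (W₂ᶜ) := hK.of_isClosed_subset hW₂open.isClosed_compl hCK
  refine ⟨W₁, hW₁, W₂ᶜ, hCcl, hCcomp, hxW₁ rfl, ?_, hCK.trans hKV⟩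
  exact Set.subset_compl_iff_disjoint_right.mpr hdis
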